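/- Let f : ℝ → ℝ be C⁴ with f'(y) > 0 for all y. Fix c ∈ ℝ and set p = f'(c), q = f'(c)·c + f(c), and φ(y) = q − p·y − f((q − f(y))/p). Then the fourth derivative satisfies φ''''(c) = (f''(c)/f'(c))·(2·f'''(c) − 3·f''(c)²/f'(c)). In particular, if 2·f'''(c)·f'(c) = 3·f''(c)², then φ'''(c) = 0 and φ''''(c) = 0, so c is a root of φ of multiplicity at least five. -/

import Mathlib

/-- Let `f` be `C⁴` with `f' > 0`, and on the flip curve set `p = f'(c)`,
`q = f'(c)·c + f(c)`, `φ(y) = q − p·y − f((q − f(y))/p)`. Then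
`φ''''(c) = (f''(c)/f'(c))·(2·f'''(c) − 3·f''(c)²/f'(c))`; in particular, if
`2·f'''(c)·f'(c) = 3·f''(c)²` then `φ'''(c) = 0` and `φ''''(c) = 0`, so `c` is a
root of `φ` of multiplicity at least five. -/
theorem codim_two_flip_point (f : ℝ → ℝ) (hf : ContDiff ℝ 4 f)
    (hpos : ∀ y : ℝ, 0 < deriv f y) (c : ℝ)
    (p q : ℝ) (hp : p = deriv f c) (hq : q = deriv f c * c + f c) :
    iteratedDeriv 4 (fun y => q - p * y - f ((q - f y) / p)) c
      = (iteratedDeriv 2 f c / deriv f c)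
          * (2 * iteratedDeriv 3 f c - 3 * (iteratedDeriv 2 f c) ^ 2 / deriv f c) ∧
    (2 * iteratedDeriv 3 f c * deriv f c = 3 * (iteratedDeriv 2 f c) ^ 2 →
      iteratedDeriv 3 (fun y => q - p * y - f ((q - f y) / p)) c = 0 ∧
      iteratedDeriv 4 (fun y => q - p * y - f ((q - f y) / p)) c = 0 ∧
      ∀ m : ℕ, m < 5 → iteratedDeriv m (fun y => q - p * y - f ((q - f y) / p)) c = 0) := by
  have hp0 : p ≠ 0 := by rw [hp]; exact (hpos c).ne'
  obtain ⟨hd0, hd1, hd2, hd3⟩ :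
      Differentiable ℝ f ∧ Differentiable ℝ (deriv f) ∧ Differentiable ℝ (deriv (deriv f))
        ∧ Differentiable ℝ (deriv (deriv (deriv f))) := by
    rw [show (4 : WithTop ℕ∞) = 3 + 1 from rfl, contDiff_succ_iff_deriv] at hf
    obtain ⟨h0, -, hf⟩ := hf
    rw [show (3 : WithTop ℕ∞) = 2 + 1 from rfl, contDiff_succ_iff_deriv] at hf
    obtain ⟨h1, -, hf⟩ := hf
    rw [show (2 : WithTop ℕ∞) = 1 + 1 from rfl, contDiff_succ_iff_deriv] at hf
    obtain ⟨h2, -, hf⟩ := hf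
    rw [show (1 : WithTop ℕ∞) = 0 + 1 from rfl, contDiff_succ_iff_deriv] at hf
    exact ⟨h0, h1, h2, hf.1⟩
  have hgc : (q - f c) / p = c := by
    rw [hq, hp]; field_simp [(hpos c).ne']; ring
  have hg' : ∀ y : ℝ, HasDerivAt (fun z => (q - f z) / p) ((0 - deriv f y) / p) y := fun y =>
    ((hasDerivAt_const y q).sub (hd0 y).hasDerivAt).div_const p
  have comp : ∀ h : ℝ → ℝ, Differentiable ℝ h → ∀ y : ℝ,
      HasDerivAt (fun z => h ((q - f z) / p))
        (deriv h ((q - f y) / p) * ((0 - deriv f y) / p)) y := by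
    intro h hh y
    simpa [Function.comp_def] using
      HasDerivAt.comp (h := fun z => (q - f z) / p) (x := y)
        (hh ((q - f y) / p)).hasDerivAt (hg' y)
  -- first derivative
  have h1 : deriv (fun y => q - p * y - f ((q - f y) / p))
      = fun y => deriv f ((q - f y) / p) * deriv f y / p - p := by
    funext y
    have H := ((hasDerivAt_const y q).sub (HasDerivAt.const_mul p (hasDerivAt_id y))).sub
      (comp f hd0 y)
    exact H.deriv.trans (by ring)
  -- second derivative
  have h2 : deriv (fun y => deriv f ((q - f y) / p) * deriv f y / p - p)
      = fun y => (deriv (deriv f) ((q - f y) / p) * ((0 - deriv f y) / p) * deriv f y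
          + deriv f ((q - f y) / p) * deriv (deriv f) y) / p := by
    funext y
    have H := (((comp (deriv f) hd1 y).mul (hd1 y).hasDerivAt).div_const p).sub
      (hasDerivAt_const y p)
    exact H.deriv.trans (by ring)
  -- third derivative
  have h3 : deriv (fun y => (deriv (deriv f) ((q - f y) / p) * ((0 - deriv f y) / p) * deriv f y
          + deriv f ((q - f y) / p) * deriv (deriv f) y) / p)
      = fun y => (deriv (deriv (deriv f)) ((q - f y) / p) * ((0 - deriv f y) / p) ^ 2 * deriv f y
          + deriv (deriv f) ((q - f y) / p) * ((0 - deriv (deriv f) y) / p) * deriv f y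
          + 2 * (deriv (deriv f) ((q - f y) / p) * ((0 - deriv f y) / p)) * deriv (deriv f) y
          + deriv f ((q - f y) / p) * deriv (deriv (deriv f)) y) / p := by
    funext y
    have cU : HasDerivAt (fun z : ℝ => (0 - deriv f z) / p) ((0 - deriv (deriv f) y) / p) y :=
      ((hasDerivAt_const y (0 : ℝ)).sub (hd1 y).hasDerivAt).div_const p
    have H := ((((comp (deriv (deriv f)) hd2 y).mul cU).mul (hd1 y).hasDerivAt).add
      ((comp (deriv f) hd1 y).mul (hd2 y).hasDerivAt)).div_const p
    exact H.deriv.trans (by simp only [Pi.mul_apply]; ring)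
  -- fourth derivative at c
  have cU : HasDerivAt (fun z : ℝ => (0 - deriv f z) / p) ((0 - deriv (deriv f) c) / p) c :=
    ((hasDerivAt_const c (0 : ℝ)).sub (hd1 c).hasDerivAt).div_const p
  have cU2 : HasDerivAt (fun z : ℝ => (0 - deriv (deriv f) z) / p)
      ((0 - deriv (deriv (deriv f)) c) / p) c :=
    ((hasDerivAt_const c (0 : ℝ)).sub (hd2 c).hasDerivAt).div_const p
  have t1 := ((comp (deriv (deriv (deriv f))) hd3 c).mul (cU.pow 2)).mul (hd1 c).hasDerivAt
  have t2 := (((comp (deriv (deriv f)) hd2 c).mul cU2).mul (hd1 c).hasDerivAt)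
  have t3 := (HasDerivAt.const_mul (2 : ℝ) ((comp (deriv (deriv f)) hd2 c).mul cU)).mul
      (hd2 c).hasDerivAt
  have t4 := (comp (deriv f) hd1 c).mul (hd3 c).hasDerivAt
  have H4 := (((t1.add t2).add t3).add t4).div_const p
  -- the key evaluations
  have key4 : deriv (deriv (deriv (deriv (fun y => q - p * y - f ((q - f y) / p))))) c
      = (deriv (deriv f) c / deriv f c)
          * (2 * deriv (deriv (deriv f)) c - 3 * (deriv (deriv f) c) ^ 2 / deriv f c) := by
    rw [h1, h2, h3]
    refine H4.deriv.trans ?_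
    simp only [Pi.mul_apply]
    rw [hgc, ← hp]
    push_cast
    norm_num
    field_simp
    simp only [← hp]
    ring
  have key3 : deriv (deriv (deriv (fun y => q - p * y - f ((q - f y) / p)))) c
      = (2 * deriv (deriv (deriv f)) c * p - 3 * (deriv (deriv f) c) ^ 2) / p := by
    rw [h1, h2]
    rw [show deriv (fun y => (deriv (deriv f) ((q - f y) / p) * ((0 - deriv f y) / p) * deriv f y
          + deriv f ((q - f y) / p) * deriv (deriv f) y) / p) c = _ from congrFun h3 c]
    rw [hgc, ← hp]
    field_simp
    ring
  have key2 : deriv (deriv (fun y => q - p * y - f ((q - f y) / p))) c = 0 := by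
    rw [h1]
    rw [show deriv (fun y => deriv f ((q - f y) / p) * deriv f y / p - p) c = _ from
      congrFun h2 c]
    rw [hgc, ← hp]
    field_simp
    ring
  have key1 : deriv (fun y => q - p * y - f ((q - f y) / p)) c = 0 := by
    rw [show deriv (fun y => q - p * y - f ((q - f y) / p)) c = _ from congrFun h1 c]
    rw [hgc, ← hp]
    field_simp
    ring
  have key0 : q - p * c - f ((q - f c) / p) = 0 := by
    rw [hgc, hq, hp]; ring
  simp only [iteratedDeriv_succ, iteratedDeriv_zero]
  refine ⟨key4, fun hflip => ?_⟩
  have hb : 3 * (deriv (deriv f) c) ^ 2 = 2 * deriv (deriv (deriv f)) c * deriv f c := hflip.symm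
  have h3z : deriv (deriv (deriv (fun y => q - p * y - f ((q - f y) / p)))) c = 0 := by
    rw [key3, hp, hb]; ring
  have h4z : deriv (deriv (deriv (deriv (fun y => q - p * y - f ((q - f y) / p))))) c = 0 := by
    have hpc : deriv f c ≠ 0 := (hpos c).ne'
    have h2d : 3 * (deriv (deriv f) c) ^ 2 / deriv f c = 2 * deriv (deriv (deriv f)) c := by
      rw [← hflip]; exact mul_div_cancel_right₀ _ hpc
    rw [key4, h2d]; ring
  refine ⟨h3z, h4z, fun m hm => ?_⟩
  interval_cases m <;>
    simp only [iteratedDeriv_succ, iteratedDeriv_zero] <;>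
    first
      | exact key0
      | exact key1
      | exact key2
      | exact h3z
      | exact h4z
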